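/- If f and g are MT-convex on I, a, b ∈ I with a < b, and fg is integrable on [a,b], then (1/(b-a)) ∫_a^b μ(x) f(x) g(x) dx ≤ (1/12)[f(a)g(a)+f(b)g(b)] + (1/24)[f(a)g(b)+f(b)g(a)], where μ(x) = (b-x)(x-a)/(b-a)². -/

import Mathlib

set_option maxRecDepth 8000

open MeasureTheory intervalIntegral

theorem mt_convex_product_integral (I : Set ℝ) (hI : Convex ℝ I) (f g : ℝ → ℝ)
    (hf0 : ∀ x ∈ I, 0 ≤ f x)
    (hf : ∀ x ∈ I, ∀ y ∈ I, ∀ t ∈ Set.Ioo (0:ℝ) 1,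
      f (t * x + (1 - t) * y) ≤
        Real.sqrt t / (2 * Real.sqrt (1 - t)) * f x +
        Real.sqrt (1 - t) / (2 * Real.sqrt t) * f y)
    (hg0 : ∀ x ∈ I, 0 ≤ g x)
    (hg : ∀ x ∈ I, ∀ y ∈ I, ∀ t ∈ Set.Ioo (0:ℝ) 1,
      g (t * x + (1 - t) * y) ≤
        Real.sqrt t / (2 * Real.sqrt (1 - t)) * g x +
        Real.sqrt (1 - t) / (2 * Real.sqrt t) * g y)
    (a b : ℝ) (ha : a ∈ I) (hb : b ∈ I) (hab : a < b)
    (hint : IntervalIntegrable (fun x => f x * g x) MeasureTheory.volume a b) :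
    (1 / (b - a)) * ∫ x in a..b, ((b - x) * (x - a) / (b - a) ^ 2) * (f x * g x) ≤
      (1 / 12) * (f a * g a + f b * g b) + (1 / 24) * (f a * g b + f b * g a) := by
  set c : ℝ := b - a with hc
  have hc0 : (0:ℝ) < c := by simp only [hc]; linarith
  have hcne : c ≠ 0 := hc0.ne'
  have hfa : 0 ≤ f a := hf0 a ha
  have hfb : 0 ≤ f b := hf0 b hb
  have hga : 0 ≤ g a := hg0 a ha
  have hgb : 0 ≤ g b := hg0 b hb
  -- the upper bound function
  set h : ℝ → ℝ := fun x =>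
    f b * g b / (4 * c ^ 2) * (x - a) ^ 2 + f a * g a / (4 * c ^ 2) * (b - x) ^ 2 +
      (f a * g b + f b * g a) / (4 * c ^ 2) * ((b - x) * (x - a)) with hh
  -- pointwise bound on Icc
  have key : ∀ x ∈ Set.Icc a b, ((b - x) * (x - a) / (b - a) ^ 2) * (f x * g x) ≤ h x := by
    intro x hx
    have hxa : a ≤ x := hx.1
    have hxb : x ≤ b := hx.2
    have hRHS0 : 0 ≤ h x := by
      have h1 : (0:ℝ) ≤ f b * g b / (4 * c ^ 2) * (x - a) ^ 2 := by positivity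
      have h2 : (0:ℝ) ≤ f a * g a / (4 * c ^ 2) * (b - x) ^ 2 := by positivity
      have h3 : (0:ℝ) ≤ (f a * g b + f b * g a) / (4 * c ^ 2) * ((b - x) * (x - a)) := by
        apply mul_nonneg
        · positivity
        · exact mul_nonneg (by linarith) (by linarith)
      simp only [hh]; linarith
    rcases eq_or_lt_of_le hxa with rfl | hax
    · simpa using hRHS0
    rcases eq_or_lt_of_le hxb with rfl | hxb'
    · simpa using hRHS0
    -- interior case
    set t : ℝ := (x - a) / c with htdef
    have ht0 : 0 < t := div_pos (by linarith) hc0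
    have ht1 : t < 1 := by
      rw [htdef, div_lt_one hc0]; simp only [hc]; linarith
    have htmem : t ∈ Set.Ioo (0:ℝ) 1 := ⟨ht0, ht1⟩
    have hxI : x ∈ I := by
      have : x ∈ segment ℝ a b := by
        rw [segment_eq_Icc hab.le]; exact ⟨hxa, hxb⟩
      exact hI.segment_subset ha hb this
    have hxeq : t * b + (1 - t) * a = x := by
      have htc : t * c = x - a := by rw [htdef]; exact div_mul_cancel₀ _ hcne
      linear_combination htc - t * hc
    set s : ℝ := Real.sqrt t with hsdef
    set u : ℝ := Real.sqrt (1 - t) with hudef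
    have hs0 : 0 < s := Real.sqrt_pos.mpr ht0
    have hu0 : 0 < u := Real.sqrt_pos.mpr (by linarith)
    have hs2 : s ^ 2 = t := Real.sq_sqrt ht0.le
    have hu2 : u ^ 2 = 1 - t := Real.sq_sqrt (by linarith)
    have hxam : x - a = s ^ 2 * c := by
      rw [hs2, htdef]; field_simp
    have hbxm : b - x = u ^ 2 * c := by
      rw [hu2, htdef]; field_simp [hc]; try ring
    have hFx : f x ≤ s / (2 * u) * f b + u / (2 * s) * f a := by
      have := hf b hb a ha t htmem
      rwa [hxeq] at this
    have hGx : g x ≤ s / (2 * u) * g b + u / (2 * s) * g a := by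
      have := hg b hb a ha t htmem
      rwa [hxeq] at this
    have hBf0 : 0 ≤ s / (2 * u) * f b + u / (2 * s) * f a := by positivity
    have hBg0 : 0 ≤ s / (2 * u) * g b + u / (2 * s) * g a := by positivity
    have hprod : f x * g x ≤
        (s / (2 * u) * f b + u / (2 * s) * f a) * (s / (2 * u) * g b + u / (2 * s) * g a) :=
      mul_le_mul hFx hGx (hg0 x hxI) hBf0
    have hmu0 : 0 ≤ (b - x) * (x - a) / (b - a) ^ 2 := by
      apply div_nonneg (mul_nonneg (by linarith) (by linarith)) (by positivity)
    calc ((b - x) * (x - a) / (b - a) ^ 2) * (f x * g x)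
        ≤ ((b - x) * (x - a) / (b - a) ^ 2) *
            ((s / (2 * u) * f b + u / (2 * s) * f a) *
              (s / (2 * u) * g b + u / (2 * s) * g a)) :=
          mul_le_mul_of_nonneg_left hprod hmu0
      _ = h x := by
          simp only [hh, ← hc, hxam, hbxm]
          field_simp
          ring
  -- integrability
  have hmuC : ContinuousOn (fun x : ℝ => (b - x) * (x - a) / (b - a) ^ 2) (Set.uIcc a b) := by
    fun_prop (disch := intros; positivity)
  have hLint : IntervalIntegrable (fun x => ((b - x) * (x - a) / (b - a) ^ 2) * (f x * g x))
      volume a b := hint.continuousOn_mul hmuC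
  have hRint : IntervalIntegrable h volume a b := by
    apply Continuous.intervalIntegrable
    simp only [hh]; fun_prop
  -- integral inequality
  have hmono : (∫ x in a..b, ((b - x) * (x - a) / (b - a) ^ 2) * (f x * g x)) ≤
      ∫ x in a..b, h x := by
    apply intervalIntegral.integral_mono_on hab.le hLint hRint key
  -- compute ∫ h
  have I1 : (∫ x in a..b, (x - a) ^ 2) = c ^ 3 / 3 := by
    rw [intervalIntegral.integral_comp_sub_right (fun u => u ^ 2) a, integral_pow]
    simp only [hc]; norm_num
  have I2 : (∫ x in a..b, (b - x) ^ 2) = c ^ 3 / 3 := by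
    have : ∀ x : ℝ, (b - x) ^ 2 = (x - b) ^ 2 := fun x => by ring
    simp_rw [this]
    rw [intervalIntegral.integral_comp_sub_right (fun u => u ^ 2) b, integral_pow]
    simp only [hc]; ring_nf
  have I3 : (∫ x in a..b, (b - x) * (x - a)) = c ^ 3 / 6 := by
    have e : ∀ x : ℝ, (b - x) * (x - a) = c * (x - a) - (x - a) ^ 2 := fun x => by
      simp only [hc]; ring
    simp_rw [e]
    rw [intervalIntegral.integral_sub ((by fun_prop : Continuous fun x : ℝ => c * (x - a)).intervalIntegrable a b)
      ((by fun_prop : Continuous fun x : ℝ => (x - a) ^ 2).intervalIntegrable a b)]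
    have I4 : (∫ x in a..b, c * (x - a)) = c * (c ^ 2 / 2) := by
      rw [intervalIntegral.integral_const_mul,
        intervalIntegral.integral_comp_sub_right (fun u => u) a, integral_id]
      simp only [hc]; ring
    rw [I4, I1]; ring
  have hinth : (∫ x in a..b, h x) =
      f b * g b / (4 * c ^ 2) * (c ^ 3 / 3) + f a * g a / (4 * c ^ 2) * (c ^ 3 / 3) +
        (f a * g b + f b * g a) / (4 * c ^ 2) * (c ^ 3 / 6) := by
    have hi1 : IntervalIntegrable (fun x => f b * g b / (4 * c ^ 2) * (x - a) ^ 2) volume a b :=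
      (by fun_prop : Continuous fun x : ℝ => f b * g b / (4 * c ^ 2) * (x - a) ^ 2).intervalIntegrable a b
    have hi2 : IntervalIntegrable (fun x => f a * g a / (4 * c ^ 2) * (b - x) ^ 2) volume a b :=
      (by fun_prop : Continuous fun x : ℝ => f a * g a / (4 * c ^ 2) * (b - x) ^ 2).intervalIntegrable a b
    have hi3 : IntervalIntegrable
        (fun x => (f a * g b + f b * g a) / (4 * c ^ 2) * ((b - x) * (x - a))) volume a b :=
      (by fun_prop : Continuous fun x : ℝ =>
        (f a * g b + f b * g a) / (4 * c ^ 2) * ((b - x) * (x - a))).intervalIntegrable a b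
    simp only [hh]
    rw [intervalIntegral.integral_add (hi1.add hi2) hi3, intervalIntegral.integral_add hi1 hi2,
      intervalIntegral.integral_const_mul, intervalIntegral.integral_const_mul,
      intervalIntegral.integral_const_mul, I1, I2, I3]
  -- conclude
  have hfinal : (1 / (b - a)) * ∫ x in a..b, ((b - x) * (x - a) / (b - a) ^ 2) * (f x * g x) ≤
      (1 / c) * ∫ x in a..b, h x := by
    rw [← hc]
    exact mul_le_mul_of_nonneg_left hmono (by positivity)
  calc (1 / (b - a)) * ∫ x in a..b, ((b - x) * (x - a) / (b - a) ^ 2) * (f x * g x)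
      ≤ (1 / c) * ∫ x in a..b, h x := hfinal
    _ = (1 / 12) * (f a * g a + f b * g b) + (1 / 24) * (f a * g b + f b * g a) := by
        rw [hinth]; field_simp; ring
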